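/- For every k ∈ ℕ there exist constants δ₀ > 0 and C > 0, depending only on k, with the following property: if w₁, …, w_k are vectors in a real inner product space such that |⟨w_i, w_j⟩ − δ_{ij}| ≤ δ for all 1 ≤ i, j ≤ k, where 0 ≤ δ ≤ δ₀, then w₁, …, w_k are linearly independent, the Gram–Schmidt orthonormalization applied to w₁, …, w_k is well-defined and produces an orthonormal family v₁, …, v_k spanning the same subspace, and ‖w_j − v_j‖ ≤ C δ for all 1 ≤ j ≤ k. -/

import Mathlib

open RealInnerProductSpace

universe u

/-- Gram–Schmidt orthonormalization of a family indexed by `Fin k`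
(this is Mathlib's `gramSchmidtNormed`, with the instances pinned down). -/
noncomputable def gsNormed {F : Type u} [NormedAddCommGroup F] [InnerProductSpace ℝ F]
    {k : ℕ} (w : Fin k → F) : Fin k → F :=
  @InnerProductSpace.gramSchmidtNormed ℝ F _ _ _ (Fin k) _ _ (inferInstance : WellFoundedLT (Fin k)) w

open InnerProductSpace

instance finWFLT {k : ℕ} : WellFoundedLT (Fin k) := inferInstance

lemma sum_pow_six_bound {n : ℕ} (j : Fin n) :
    ∑ i ∈ Finset.Iio j, (6:ℝ)^((i:ℕ)+1) ≤ 6^((j:ℕ)+1)/5 := by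
  have h1 : ∑ i ∈ Finset.Iio j, (6:ℝ)^((i:ℕ)+1)
      = ∑ m ∈ Finset.range j.val, (6:ℝ)^(m+1) := by
    rw [← Nat.Iio_eq_range, ← Fin.map_valEmbedding_Iio, Finset.sum_map]
    rfl
  have h2 : ∑ m ∈ Finset.range j.val, (6:ℝ)^(m+1)
      = 6 * ∑ m ∈ Finset.range j.val, (6:ℝ)^m := by
    rw [Finset.mul_sum]; exact Finset.sum_congr rfl fun m _ => by ring
  have h := geom_sum_eq (by norm_num : (6:ℝ) ≠ 1) j.val
  have hp : (0:ℝ) ≤ 6 ^ j.val := by positivity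
  rw [h1, h2, h, pow_succ]
  nlinarith

lemma gs_key {F : Type u} [NormedAddCommGroup F] [InnerProductSpace ℝ F] {k : ℕ}
    (w : Fin k → F) (δ : ℝ) (hδ0 : 0 ≤ δ) (hδ : δ ≤ 1/(8*6^(k+1)))
    (hw : ∀ i j : Fin k, |⟪w i, w j⟫ - if i = j then 1 else 0| ≤ δ) :
    ∀ j : Fin k, gramSchmidt ℝ w j ≠ 0 ∧
      ‖w j - gramSchmidtNormed ℝ w j‖ ≤ 6^((j:ℕ)+1) * δ := by
  -- preliminaries
  have h6k : (6:ℝ) ≤ 6^(k+1) := le_self_pow₀ (by norm_num) (Nat.succ_ne_zero k)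
  have h6kpos : (0:ℝ) < 6^(k+1) := by positivity
  have hδ48 : δ ≤ 1/48 := by
    refine hδ.trans ?_
    rw [div_le_div_iff₀ (by nlinarith) (by norm_num)]
    nlinarith
  have hm2 : ∀ m : Fin k, |‖w m‖^2 - 1| ≤ δ := by
    intro m
    have := hw m m
    simpa [real_inner_self_eq_norm_sq] using this
  have hub : ∀ m : Fin k, ‖w m‖ ≤ 3/2 := by
    intro m
    have h := abs_le.1 (hm2 m)
    nlinarith [norm_nonneg (w m)]
  have hlb : ∀ m : Fin k, (3/4:ℝ) ≤ ‖w m‖ := by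
    intro m
    have h := abs_le.1 (hm2 m)
    nlinarith [norm_nonneg (w m)]
  have hdist1 : ∀ m : Fin k, |‖w m‖ - 1| ≤ δ := by
    intro m
    have h := abs_le.1 (hm2 m)
    rw [abs_le]
    constructor <;> nlinarith [norm_nonneg (w m)]
  -- strong induction on j
  have main : ∀ n : ℕ, ∀ j : Fin k, (j:ℕ) = n → gramSchmidt ℝ w j ≠ 0 ∧
      ‖w j - gramSchmidtNormed ℝ w j‖ ≤ 6^((j:ℕ)+1) * δ := by
    intro n
    induction n using Nat.strong_induction_on with
    | _ n ihn =>
      intro j hj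
      have ih : ∀ i : Fin k, i < j → gramSchmidt ℝ w i ≠ 0 ∧
          ‖w i - gramSchmidtNormed ℝ w i‖ ≤ 6^((i:ℕ)+1) * δ := by
        intro i hi
        exact ihn i.val (hj ▸ hi) i rfl
      subst hj
      -- bound on the individual projection terms
      have hterm : ∀ i ∈ Finset.Iio j,
          ‖(⟪gramSchmidt ℝ w i, w j⟫ / ‖gramSchmidt ℝ w i‖^2) • gramSchmidt ℝ w i‖
            ≤ 2 * 6^((i:ℕ)+1) * δ := by
        intro i hi
        have hij : i < j := Finset.mem_Iio.1 hi
        obtain ⟨hu_ne, hwv⟩ := ih i hij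
        have hnu : ‖gramSchmidt ℝ w i‖ ≠ 0 := norm_ne_zero_iff.2 hu_ne
        have hv : gramSchmidtNormed ℝ w i
            = ‖gramSchmidt ℝ w i‖⁻¹ • gramSchmidt ℝ w i := by
          simp [gramSchmidtNormed]
        have hnv : ‖gramSchmidtNormed ℝ w i‖ = 1 := by
          rw [hv]; exact norm_smul_inv_norm hu_ne
        have hterm_eq : (⟪gramSchmidt ℝ w i, w j⟫ / ‖gramSchmidt ℝ w i‖^2) • gramSchmidt ℝ w i
            = ⟪gramSchmidtNormed ℝ w i, w j⟫ • gramSchmidtNormed ℝ w i := by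
          have hs : ⟪gramSchmidt ℝ w i, w j⟫ / ‖gramSchmidt ℝ w i‖^2
              = ‖gramSchmidt ℝ w i‖⁻¹ * ⟪gramSchmidt ℝ w i, w j⟫ * ‖gramSchmidt ℝ w i‖⁻¹ := by
            rw [div_eq_mul_inv, sq, mul_inv]
            ring
          rw [hv, real_inner_smul_left, smul_smul, hs]
        rw [hterm_eq, norm_smul, hnv, mul_one, Real.norm_eq_abs]
        -- now bound |⟪v i, w j⟫|
        have hsplit : ⟪gramSchmidtNormed ℝ w i, w j⟫
            = ⟪w i, w j⟫ + ⟪gramSchmidtNormed ℝ w i - w i, w j⟫ := by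
          rw [inner_sub_left]; ring
        have h1 : |⟪w i, w j⟫| ≤ δ := by
          have := hw i j
          rw [if_neg hij.ne] at this
          simpa using this
        have h2 : |⟪gramSchmidtNormed ℝ w i - w i, w j⟫| ≤ (6^((i:ℕ)+1) * δ) * (3/2) := by
          refine (abs_real_inner_le_norm _ _).trans ?_
          have : ‖gramSchmidtNormed ℝ w i - w i‖ = ‖w i - gramSchmidtNormed ℝ w i‖ :=
            norm_sub_rev _ _
          refine mul_le_mul (this ▸ hwv) (hub j) (norm_nonneg _) (by positivity)
        have hpow1 : (6:ℝ) ≤ 6^((i:ℕ)+1) := le_self_pow₀ (by norm_num) (Nat.succ_ne_zero _)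
        calc |⟪gramSchmidtNormed ℝ w i, w j⟫|
            ≤ |⟪w i, w j⟫| + |⟪gramSchmidtNormed ℝ w i - w i, w j⟫| := by
              rw [hsplit]; exact abs_add_le _ _
          _ ≤ δ + (6^((i:ℕ)+1) * δ) * (3/2) := add_le_add h1 h2
          _ ≤ 2 * 6^((i:ℕ)+1) * δ := by
              nlinarith [mul_nonneg hδ0 (by linarith : (0:ℝ) ≤ 6^((i:ℕ)+1) - 2)]
      -- bound on ‖w j - u j‖
      have hdiff : w j - gramSchmidt ℝ w j = ∑ i ∈ Finset.Iio j,
          (⟪gramSchmidt ℝ w i, w j⟫ / ‖gramSchmidt ℝ w i‖^2) • gramSchmidt ℝ w i := by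
        have hdef := gramSchmidt_def'' ℝ w j
        have hdef' : w j = gramSchmidt ℝ w j + ∑ i ∈ Finset.Iio j,
            (⟪gramSchmidt ℝ w i, w j⟫ / ‖gramSchmidt ℝ w i‖^2) • gramSchmidt ℝ w i := by
          convert hdef using 3
          simp
        conv_lhs => rw [hdef']
        abel
      have hsum : ‖w j - gramSchmidt ℝ w j‖ ≤ 2 * (6^((j:ℕ)+1)/5) * δ := by
        rw [hdiff]
        calc ‖∑ i ∈ Finset.Iio j,
            (⟪gramSchmidt ℝ w i, w j⟫ / ‖gramSchmidt ℝ w i‖^2) • gramSchmidt ℝ w i‖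
            ≤ ∑ i ∈ Finset.Iio j,
              ‖(⟪gramSchmidt ℝ w i, w j⟫ / ‖gramSchmidt ℝ w i‖^2) • gramSchmidt ℝ w i‖ :=
              norm_sum_le _ _
          _ ≤ ∑ i ∈ Finset.Iio j, 2 * 6^((i:ℕ)+1) * δ := Finset.sum_le_sum hterm
          _ = 2 * δ * ∑ i ∈ Finset.Iio j, 6^((i:ℕ)+1) := by
              rw [Finset.mul_sum]; exact Finset.sum_congr rfl fun i _ => by ring
          _ ≤ 2 * δ * (6^((j:ℕ)+1)/5) := by
              refine mul_le_mul_of_nonneg_left (sum_pow_six_bound j) (by positivity)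
          _ = 2 * (6^((j:ℕ)+1)/5) * δ := by ring
      -- numeric bound
      have hpowjk : (6:ℝ)^((j:ℕ)+1) ≤ 6^(k+1) := by
        apply pow_le_pow_right₀ (by norm_num)
        exact Nat.succ_le_succ j.isLt.le
      have hsmall : 2 * (6^((j:ℕ)+1)/5) * δ ≤ 1/20 := by
        have e1 : (6:ℝ)^((j:ℕ)+1) * δ ≤ 6^(k+1) * (1/(8*6^(k+1))) :=
          mul_le_mul hpowjk hδ hδ0 h6kpos.le
        have e2 : (6:ℝ)^(k+1) * (1/(8*6^(k+1))) = 1/8 := by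
          field_simp
        rw [e2] at e1
        nlinarith [pow_nonneg (by norm_num : (0:ℝ) ≤ 6) ((j:ℕ)+1)]
      -- u j ≠ 0
      have hu_lb : (3/5:ℝ) ≤ ‖gramSchmidt ℝ w j‖ := by
        have h := norm_sub_norm_le (w j) (gramSchmidt ℝ w j)
        have := hlb j
        have h2 : ‖w j - gramSchmidt ℝ w j‖ ≤ 1/20 := hsum.trans hsmall
        linarith
      have hu_pos : (0:ℝ) < ‖gramSchmidt ℝ w j‖ := by linarith
      have hu_ne : gramSchmidt ℝ w j ≠ 0 := by
        intro h
        rw [h, norm_zero] at hu_pos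
        exact lt_irrefl _ hu_pos
      refine ⟨hu_ne, ?_⟩
      -- bound ‖w j - v j‖
      have hvj : gramSchmidtNormed ℝ w j
          = ‖gramSchmidt ℝ w j‖⁻¹ • gramSchmidt ℝ w j := by simp [gramSchmidtNormed]
      have huv : ‖gramSchmidt ℝ w j - gramSchmidtNormed ℝ w j‖ = |‖gramSchmidt ℝ w j‖ - 1| := by
        rw [hvj]
        have : gramSchmidt ℝ w j - ‖gramSchmidt ℝ w j‖⁻¹ • gramSchmidt ℝ w j
            = (1 - ‖gramSchmidt ℝ w j‖⁻¹) • gramSchmidt ℝ w j := by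
          rw [sub_smul, one_smul]
        rw [this, norm_smul, Real.norm_eq_abs]
        rw [← abs_of_pos hu_pos, ← abs_mul]
        congr 1
        field_simp
        rw [abs_of_pos hu_pos]; ring
      have habs1 : |‖gramSchmidt ℝ w j‖ - 1|
          ≤ ‖w j - gramSchmidt ℝ w j‖ + δ := by
        have h1 : |‖gramSchmidt ℝ w j‖ - ‖w j‖| ≤ ‖gramSchmidt ℝ w j - w j‖ :=
          abs_norm_sub_norm_le _ _
        rw [norm_sub_rev] at h1
        have h2 := hdist1 j
        calc |‖gramSchmidt ℝ w j‖ - 1|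
            ≤ |‖gramSchmidt ℝ w j‖ - ‖w j‖| + |‖w j‖ - 1| := by
              have : ‖gramSchmidt ℝ w j‖ - 1
                  = (‖gramSchmidt ℝ w j‖ - ‖w j‖) + (‖w j‖ - 1) := by ring
              rw [this]; exact abs_add_le _ _
          _ ≤ ‖w j - gramSchmidt ℝ w j‖ + δ := add_le_add h1 h2
      have htotal : ‖w j - gramSchmidtNormed ℝ w j‖
          ≤ 2 * (2 * (6^((j:ℕ)+1)/5) * δ) + δ := by
        calc ‖w j - gramSchmidtNormed ℝ w j‖
            ≤ ‖w j - gramSchmidt ℝ w j‖ + ‖gramSchmidt ℝ w j - gramSchmidtNormed ℝ w j‖ :=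
              norm_sub_le_norm_sub_add_norm_sub _ _ _
          _ ≤ ‖w j - gramSchmidt ℝ w j‖ + (‖w j - gramSchmidt ℝ w j‖ + δ) := by
              rw [huv]; linarith [habs1]
          _ ≤ 2 * (2 * (6^((j:ℕ)+1)/5) * δ) + δ := by linarith [hsum]
      refine htotal.trans ?_
      have hpow6 : (6:ℝ) ≤ 6^((j:ℕ)+1) := le_self_pow₀ (by norm_num) (Nat.succ_ne_zero _)
      nlinarith
  intro j
  exact main j.val j rfl

theorem statement_8 (k : ℕ) :
    ∃ δ₀ C : ℝ, 0 < δ₀ ∧ 0 < C ∧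
      ∀ (F : Type u) [NormedAddCommGroup F] [InnerProductSpace ℝ F]
        (w : Fin k → F) (δ : ℝ), 0 ≤ δ → δ ≤ δ₀ →
        (∀ i j : Fin k, |⟪w i, w j⟫ - if i = j then 1 else 0| ≤ δ) →
        LinearIndependent ℝ w ∧
        Orthonormal ℝ (gsNormed w) ∧
        Submodule.span ℝ (Set.range (gsNormed w)) = Submodule.span ℝ (Set.range w) ∧
        ∀ j : Fin k, ‖w j - gsNormed w j‖ ≤ C * δ := by
  refine ⟨1/(8*6^(k+1)), 6^(k+1), by positivity, by positivity, ?_⟩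
  intro F _ _ w δ hδ0 hδ hw
  have key := gs_key w δ hδ0 hδ hw
  have hgs : gsNormed w = gramSchmidtNormed ℝ w := rfl
  have hvnorm : ∀ j : Fin k, ‖gsNormed w j‖ = 1 := by
    intro j
    rw [hgs]
    have hv : gramSchmidtNormed ℝ w j
        = ‖gramSchmidt ℝ w j‖⁻¹ • gramSchmidt ℝ w j := by simp [gramSchmidtNormed]
    rw [hv]
    exact norm_smul_inv_norm (key j).1
  have horth : Orthonormal ℝ (gsNormed w) := by
    refine ⟨hvnorm, fun i j hij => ?_⟩
    rw [hgs]
    simp [gramSchmidtNormed, real_inner_smul_left, real_inner_smul_right,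
      gramSchmidt_orthogonal ℝ w hij]
  have hspan : Submodule.span ℝ (Set.range (gsNormed w))
      = Submodule.span ℝ (Set.range w) := by
    rw [hgs, span_gramSchmidtNormed_range, span_gramSchmidt]
  have hli : LinearIndependent ℝ w := by
    rw [linearIndependent_iff_card_eq_finrank_span]
    have h1 := linearIndependent_iff_card_eq_finrank_span.1 horth.linearIndependent
    rw [h1]
    unfold Set.finrank
    rw [hspan]
  refine ⟨hli, horth, hspan, ?_⟩
  intro j
  refine ((key j).2).trans ?_
  have hpowjk : (6:ℝ)^((j:ℕ)+1) ≤ 6^(k+1) := by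
    apply pow_le_pow_right₀ (by norm_num)
    exact Nat.succ_le_succ j.isLt.le
  exact mul_le_mul_of_nonneg_right hpowjk hδ0
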